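/- arXiv:math/9812048 — 2 statements merged into one kernel-verified Lean document; each statement's English description precedes it below -/
import Mathlib

section
/- The map p: ℂ* × ℂ* → ℂ³, p(l,m) = (l + l⁻¹, m + m⁻¹, lm + l⁻¹m⁻¹), satisfies p(l,m) = p(l',m') if and only if (l',m') = (l,m) or (l',m') = (l⁻¹, m⁻¹). In particular p is a two-to-one map away from the four points (l,m) with l, m ∈ {1, −1}. -/
lemma aux_sum_inv (x y : ℂ) (hx : x ≠ 0) (hy : y ≠ 0) :
    x + x⁻¹ = y + y⁻¹ ↔ (y = x ∨ y = x⁻¹) := by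
  constructor
  · intro h
    have h2 : (y - x) * (x * y - 1) = 0 := by
      field_simp at h
      linear_combination -h
    rcases mul_eq_zero.mp h2 with h3 | h3
    · exact Or.inl (sub_eq_zero.mp h3)
    · right
      field_simp
      linear_combination h3
  · rintro (rfl | rfl)
    · rfl
    · rw [inv_inv]; ring

/-- p(l,m) = (l+l⁻¹, m+m⁻¹, lm+l⁻¹m⁻¹) satisfies p(l,m) = p(l',m') iff
(l',m') = (l,m) or (l',m') = (l⁻¹,m⁻¹); in particular p is two-to-one away from
the four points with l, m ∈ {1,−1}. -/
theorem p_two_fold_cover (l m l' m' : ℂ) (hl : l ≠ 0) (hm : m ≠ 0)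
    (hl' : l' ≠ 0) (hm' : m' ≠ 0) :
    ((l + l⁻¹, m + m⁻¹, l * m + l⁻¹ * m⁻¹)
        = (l' + l'⁻¹, m' + m'⁻¹, l' * m' + l'⁻¹ * m'⁻¹))
      ↔ ((l' = l ∧ m' = m) ∨ (l' = l⁻¹ ∧ m' = m⁻¹)) := by
  simp only [Prod.mk.injEq]
  constructor
  · rintro ⟨h1, h2, h3⟩
    have e1 := (aux_sum_inv l l' hl hl').mp h1
    have e2 := (aux_sum_inv m m' hm hm').mp h2
    have h3' : l * m + (l * m)⁻¹ = l' * m' + (l' * m')⁻¹ := by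
      rw [mul_inv, mul_inv]; exact h3
    have e3 := (aux_sum_inv (l * m) (l' * m') (mul_ne_zero hl hm)
      (mul_ne_zero hl' hm')).mp h3'
    rcases e1 with rfl | rfl <;> rcases e2 with rfl | rfl
    · exact Or.inl ⟨rfl, rfl⟩
    · rcases e3 with h | h
      · exact Or.inl ⟨rfl, mul_left_cancel₀ hl h⟩
      · rw [mul_inv] at h
        exact Or.inr ⟨mul_right_cancel₀ (inv_ne_zero hm) h, rfl⟩
    · rcases e3 with h | h
      · exact Or.inl ⟨mul_right_cancel₀ hm h, rfl⟩
      · rw [mul_inv] at h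
        exact Or.inr ⟨rfl, mul_left_cancel₀ (inv_ne_zero hl) h⟩
    · exact Or.inr ⟨rfl, rfl⟩
  · rintro (⟨rfl, rfl⟩ | ⟨rfl, rfl⟩)
    · exact ⟨rfl, rfl, rfl⟩
    · refine ⟨by rw [inv_inv, add_comm], by rw [inv_inv, add_comm], ?_⟩
      rw [inv_inv, inv_inv]; ring
end

section
/- In the quantum plane ℂ_t[l,m] (relation lm = t²ml), the left ideal generated by f₁ = m² + (t² + t⁻²)m + 1 and f₂ = t⁻³l²m² + t⁻⁵l²m + t⁻¹m + t equals the left ideal generated by g₁ = m² + (t² + t⁻²)m + 1 and g₂ = l²m + t⁻²l² − m − t², where t is a nonzero complex number with t⁴ ≠ 1. -/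
/-- In the quantum plane ℂ_t[l,m] (lm = t²ml, t ≠ 0, t⁴ ≠ 1), the left ideal
generated by f₁ = m² + (t²+t⁻²)m + 1 and f₂ = t⁻³l²m² + t⁻⁵l²m + t⁻¹m + t
equals the left ideal generated by g₁ = m² + (t²+t⁻²)m + 1 and
g₂ = l²m + t⁻²l² − m − t². -/
theorem quantum_plane_unknot_ideal_groebner
    (t : ℂ) (ht : t ≠ 0) (ht4 : t ^ 4 ≠ 1) (A : Type*) [Ring A] [Algebra ℂ A]
    (l m : A) (rel : l * m = (t ^ 2 : ℂ) • (m * l))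
    (B : Module.Basis (ℕ × ℕ) ℂ A) (hB : ∀ p q : ℕ, B (p, q) = l ^ p * m ^ q) :
    Submodule.span A
        ({m ^ 2 + (t ^ (2 : ℤ) + t ^ (-2 : ℤ)) • m + 1,
          (t ^ (-3 : ℤ)) • (l ^ 2 * m ^ 2) + (t ^ (-5 : ℤ)) • (l ^ 2 * m)
            + (t ^ (-1 : ℤ)) • m + t • (1 : A)} : Set A)
      = Submodule.span A
          ({m ^ 2 + (t ^ (2 : ℤ) + t ^ (-2 : ℤ)) • m + 1,
            l ^ 2 * m + (t ^ (-2 : ℤ)) • l ^ 2 - m - (t ^ (2 : ℤ)) • (1 : A)} : Set A) := by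
  have e1 : t ^ (-1 : ℤ) = t⁻¹ := zpow_neg_one t
  have e2 : t ^ (2 : ℤ) = t ^ 2 := by norm_cast
  have e2' : t ^ (-2 : ℤ) = (t ^ 2)⁻¹ := by rw [zpow_neg]; norm_cast
  have e3 : t ^ (-3 : ℤ) = (t ^ 3)⁻¹ := by rw [zpow_neg]; norm_cast
  have e5 : t ^ (-5 : ℤ) = (t ^ 5)⁻¹ := by rw [zpow_neg]; norm_cast
  set f1 : A := m ^ 2 + (t ^ (2 : ℤ) + t ^ (-2 : ℤ)) • m + 1 with hf1
  set f2 : A := (t ^ (-3 : ℤ)) • (l ^ 2 * m ^ 2) + (t ^ (-5 : ℤ)) • (l ^ 2 * m)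
      + (t ^ (-1 : ℤ)) • m + t • (1 : A) with hf2
  set g2 : A := l ^ 2 * m + (t ^ (-2 : ℤ)) • l ^ 2 - m - (t ^ (2 : ℤ)) • (1 : A) with hg2
  have expand : l ^ 2 * f1 = l ^ 2 * m ^ 2
      + (t ^ (2 : ℤ) + t ^ (-2 : ℤ)) • (l ^ 2 * m) + l ^ 2 := by
    rw [hf1, mul_add, mul_add, mul_one, mul_smul_comm]
  have keyf : f2 = (t ^ (-3 : ℤ)) • (l ^ 2 * f1) + (-(t ^ (-1 : ℤ))) • g2 := by
    rw [expand, hf2, hg2]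
    rw [e1, e2, e2', e3, e5]
    match_scalars <;> (try field_simp) <;> ring
  have keyg : g2 = (t ^ (-2 : ℤ)) • (l ^ 2 * f1) + (-t) • f2 := by
    rw [expand, hf2, hg2]
    rw [e1, e2, e2', e3, e5]
    match_scalars <;> (try field_simp) <;> ring
  apply le_antisymm <;> rw [Submodule.span_le] <;> rintro x (rfl | rfl)
  · exact Submodule.subset_span (Set.mem_insert _ _)
  · rw [keyf]
    refine add_mem (Submodule.smul_of_tower_mem _ _ ?_) (Submodule.smul_of_tower_mem _ _ ?_)
    · exact Submodule.smul_mem _ (l ^ 2) (Submodule.subset_span (Set.mem_insert _ _))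
    · exact Submodule.subset_span (Set.mem_insert_of_mem _ rfl)
  · exact Submodule.subset_span (Set.mem_insert _ _)
  · rw [keyg]
    refine add_mem (Submodule.smul_of_tower_mem _ _ ?_) (Submodule.smul_of_tower_mem _ _ ?_)
    · exact Submodule.smul_mem _ (l ^ 2) (Submodule.subset_span (Set.mem_insert _ _))
    · exact Submodule.subset_span (Set.mem_insert_of_mem _ rfl)
end
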